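/- In the FOND translation T(Q) with a bounded stack and counters, any infinite trajectory of a strong cyclic policy is terminating: among the recurrent states there is a variable X held at a fixed stack depth d throughout all recurrent states, such that X is decremented at some recurrent state (via an a(X,d) action) and incremented at no recurrent state (increments of X are disabled while X is on the stack). -/

import Mathlib

/-- A state of the FOND translation `T(Q)`: a boolean state `b`, the top counter `cT`,
the counters `c d` for each stack depth `d`, and the stack `α` of (distinct) numerical
variables, listed from the bottom (depth 1) up. -/
structure TState (B Var : Type*) where
  b : B
  cT : ℕ
  c : ℕ → ℕ
  α : List Var

/-- Action labels of `T(Q)`: `push X d` / `pop X d` manipulate the stack at depth `d`,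
`move` advances the top counter, `act a X d` is the action `a(X,d)` of `T(Q)` for a
QNP action `a` decrementing the variable `X` stacked at depth `d`, and `actD a` is the
deterministic version of a QNP action `a` that decrements no variable. -/
inductive TLab (Act0 Var : Type*) where
  | push (X : Var) (d : ℕ)
  | pop (X : Var) (d : ℕ)
  | move
  | act (a : Act0) (X : Var) (d : ℕ)
  | actD (a : Act0)

/-- Variable `X` sits at depth `d` of the stack `α` (depth 1 is the bottom). -/
def atDepth {Var : Type*} (α : List Var) (X : Var) (d : ℕ) : Prop :=
  1 ≤ d ∧ α[d - 1]? = some X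

/-- The label `l` increments the variable `X` (only `act`/`actD` labels do). -/
def incLab {Act0 Var : Type*} (inc : Act0 → Finset Var) :
    TLab Act0 Var → Var → Prop
  | .act a _ _, X => X ∈ inc a
  | .actD a, X => X ∈ inc a
  | _, _ => False

/-- The transition relation of `T(Q)`. `dec a`/`inc a` are the variables decremented /
incremented by the QNP action `a`; `RelN a` is the (non-deterministic) effect on boolean
states of an action `a` that decrements variables, `effD a` the (deterministic) effect
of an action that decrements none; `Max` bounds the counters.
* `push X d`: requires `X ∉ α`, `|α| = d` and `c d < Max`; pushes `X`, increments `c d`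
  and resets `c (d+1)` to `0`.
* `pop X d`: pops the top variable `X` at depth `d = |α|`.
* `move`: requires an empty stack and `cT < Max`; increments `cT`.
* `act a X d`: requires `X ∈ dec a` on the stack at depth `d`, and every variable
  incremented by `a` not on the stack; resets `c d'` for all `d' ≥ d`.
* `actD a`: requires `dec a = ∅` and every incremented variable not on the stack. -/
inductive TStep {B Act0 Var : Type*} (dec inc : Act0 → Finset Var)
    (RelN : Act0 → B → B → Prop) (effD : Act0 → B → B) (Max : ℕ) :
    TState B Var → TLab Act0 Var → TState B Var → Prop
  | push (s : TState B Var) (X : Var) (hX : X ∉ s.α) (hc : s.c s.α.length < Max) :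
      TStep dec inc RelN effD Max s (.push X s.α.length)
        ⟨s.b, s.cT,
          fun d' => if d' = s.α.length then s.c d' + 1
                    else if d' = s.α.length + 1 then 0 else s.c d',
          s.α ++ [X]⟩
  | pop (s : TState B Var) (X : Var) (h : atDepth s.α X s.α.length) :
      TStep dec inc RelN effD Max s (.pop X s.α.length)
        ⟨s.b, s.cT, s.c, s.α.dropLast⟩
  | move (s : TState B Var) (hα : s.α = []) (hc : s.cT < Max) :
      TStep dec inc RelN effD Max s .move ⟨s.b, s.cT + 1, s.c, s.α⟩
  | act (s : TState B Var) (a : Act0) (X : Var) (d : ℕ)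
      (hXd : atDepth s.α X d) (hdec : X ∈ dec a)
      (hinc : ∀ Y ∈ inc a, Y ∉ s.α) (b' : B) (hb : RelN a s.b b') :
      TStep dec inc RelN effD Max s (.act a X d)
        ⟨b', s.cT, fun d' => if d ≤ d' then 0 else s.c d', s.α⟩
  | actD (s : TState B Var) (a : Act0) (hdec : dec a = ∅)
      (hinc : ∀ Y ∈ inc a, Y ∉ s.α) :
      TStep dec inc RelN effD Max s (.actD a) ⟨effD a s.b, s.cT, s.c, s.α⟩

/-- One step of the execution of policy `π` in `T(Q)`. -/
def TpiStep {B Act0 Var : Type*} (dec inc : Act0 → Finset Var)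
    (RelN : Act0 → B → B → Prop) (effD : Act0 → B → B) (Max : ℕ)
    (π : TState B Var → Option (TLab Act0 Var)) (s s' : TState B Var) : Prop :=
  ∃ l, π s = some l ∧ TStep dec inc RelN effD Max s l s'

section Aux18

variable {B Act0 Var : Type*} {dec inc : Act0 → Finset Var}
  {RelN : Act0 → B → B → Prop} {effD : Act0 → B → B} {Max : ℕ}

/-- Invariant along trajectories. -/
def aux18Inv (Max K : ℕ) {B Var : Type*} (s : TState B Var) : Prop :=
  s.α.Nodup ∧ s.α.length ≤ K ∧ s.cT ≤ Max ∧ ∀ e, s.c e ≤ Max ∧ (K < e → s.c e = 0)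

lemma aux18_det {s s1 s2 : TState B Var} {l : TLab Act0 Var}
    (hl : ∀ a X d, l ≠ .act a X d)
    (h1 : TStep dec inc RelN effD Max s l s1)
    (h2 : TStep dec inc RelN effD Max s l s2) : s1 = s2 := by
  cases h1 <;> cases h2 <;> first
    | rfl
    | exact absurd rfl (hl _ _ _)

lemma aux18_inv {s s' : TState B Var} {l : TLab Act0 Var} {K : ℕ}
    (hK : ∀ lst : List Var, lst.Nodup → lst.length ≤ K)
    (h : TStep dec inc RelN effD Max s l s') (hs : aux18Inv Max K s) :
    aux18Inv Max K s' := by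
  obtain ⟨hn, hlen, hT, hc⟩ := hs
  cases h with
  | push X hX hcc =>
    have hn' : (s.α ++ [X]).Nodup := by
      simp only [List.nodup_append, List.nodup_cons, List.not_mem_nil,
        not_false_iff, List.nodup_nil, and_true, true_and]
      exact ⟨hn, fun a ha h hh hah => hX (by rw [List.mem_singleton.mp hh] at hah; rwa [hah] at ha)⟩
    have hlen' : s.α.length + 1 ≤ K := by simpa using hK _ hn'
    refine ⟨hn', by simpa using hlen', hT, fun e => ?_⟩
    dsimp only
    split_ifs with h1 h2
    · subst h1; exact ⟨by omega, fun hKe => by omega⟩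
    · exact ⟨by omega, fun _ => rfl⟩
    · exact hc e
  | pop X hX =>
    exact ⟨hn.sublist (List.dropLast_sublist _), le_trans
      (by simpa using List.length_dropLast s.α ▸ Nat.sub_le _ _) hlen, hT, hc⟩
  | move hα hcc => exact ⟨hn, hlen, by dsimp only; omega, hc⟩
  | act a X dd hXd hdec hinc b' hb =>
    refine ⟨hn, hlen, hT, fun e => ?_⟩
    dsimp only
    split_ifs
    · exact ⟨by omega, fun _ => rfl⟩
    · exact hc e
  | actD a hdec hinc => exact ⟨hn, hlen, hT, hc⟩

set_option synthInstance.maxHeartbeats 1000000 in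
lemma aux18_finite (K : ℕ) [Finite B] [Finite Var] :
    Finite {s : TState B Var // aux18Inv Max K s} := by
  haveI : Finite (Option Var) := Finite.of_equiv (Var ⊕ Unit) (Equiv.optionEquivSumPUnit Var).symm
  let f : {s : TState B Var // aux18Inv Max K s} →
      B × Fin (Max + 1) × (Fin (K + 2) → Fin (Max + 1)) × (Fin (K + 1) → Option Var) :=
    fun s => ⟨s.1.b, ⟨s.1.cT, by have := s.2.2.2.1; omega⟩,
      fun e => ⟨s.1.c e, by have := (s.2.2.2.2 e).1; omega⟩,
      fun j => s.1.α[(j : ℕ)]?⟩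
  apply Finite.of_injective f
  rintro ⟨⟨b1, t1, c1, a1⟩, h1⟩ ⟨⟨b2, t2, c2, a2⟩, h2⟩ h
  simp only [f, Prod.mk.injEq, Fin.mk.injEq] at h
  obtain ⟨hb, ht, hcf, haf⟩ := h
  apply Subtype.ext
  simp only [TState.mk.injEq]
  refine ⟨hb, ht, funext fun e => ?_, ?_⟩
  · by_cases he : e < K + 2
    · have := congrFun hcf ⟨e, he⟩
      simpa using this
    · have h1' := (h1.2.2.2 e).2 (by omega)
      have h2' := (h2.2.2.2 e).2 (by omega)
      simp only at h1' h2' ⊢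
      omega
  · apply List.ext_getElem?
    intro n
    by_cases hnK : n < K + 1
    · have := congrFun haf ⟨n, hnK⟩
      simpa using this
    · have e1 : a1.length ≤ n := by have := h1.2.1; simp only at this; omega
      have e2 : a2.length ≤ n := by have := h2.2.1; simp only at this; omega
      rw [List.getElem?_eq_none e1, List.getElem?_eq_none e2]


lemma aux18_act_inv {s s' : TState B Var} {a : Act0} {X : Var} {dd : ℕ}
    (h : TStep dec inc RelN effD Max s (.act a X dd) s') :
    atDepth s.α X dd ∧ (∀ Y ∈ inc a, Y ∉ s.α) := by
  cases h with
  | act a2 X2 dd2 hXd hdec hinc b' hb => exact ⟨hXd, hinc⟩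

lemma aux18_actD_inv {s s' : TState B Var} {a : Act0}
    (h : TStep dec inc RelN effD Max s (.actD a) s') :
    ∀ Y ∈ inc a, Y ∉ s.α := by
  cases h with
  | actD a2 hdec hinc => exact hinc

lemma aux18_push_inv {s s' : TState B Var} {X : Var} {e : ℕ}
    (h : TStep dec inc RelN effD Max s (.push X e) s') :
    e = s.α.length ∧ s'.c e = s.c e + 1 ∧ s.c e < Max := by
  cases h with
  | push X2 hX hc => exact ⟨rfl, by simp, hc⟩

/-- counter monotonicity for non-resetting steps -/
lemma aux18_cmono {s s' : TState B Var} {l : TLab Act0 Var} (e : ℕ)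
    (h : TStep dec inc RelN effD Max s l s')
    (hact : ∀ a X d', l = .act a X d' → e < d')
    (hpush : ∀ X e', l = .push X e' → e ≠ e' + 1) :
    s.c e ≤ s'.c e := by
  cases h with
  | push X hX hc =>
    have hne := hpush X s.α.length rfl
    dsimp only
    split_ifs <;> omega
  | pop X hX => exact le_rfl
  | move hα hc => exact le_rfl
  | act a X dd hXd hdec hinc b' hb =>
    have := hact a X dd rfl
    dsimp only
    rw [if_neg (by omega)]
  | actD a hdec hinc => exact le_rfl

/-- lengths below `dm` are invariant when no pushes below `dm` happen -/
lemma aux18_len {s s' : TState B Var} {l : TLab Act0 Var} {dm : ℕ} (hd1 : 1 ≤ dm)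
    (h : TStep dec inc RelN effD Max s l s')
    (hpush : ∀ X e', l = .push X e' → ¬ e' < dm)
    (hlen : s.α.length < dm) : s'.α.length < dm := by
  cases h with
  | push X hX hc => exact absurd hlen (hpush X s.α.length rfl)
  | pop X hX => dsimp only; rw [List.length_dropLast]; omega
  | move hα hc => dsimp only; rw [hα]; simp only [List.length_nil]; omega
  | act a X dd hXd hdec hinc b' hb => exact hlen
  | actD a hdec hinc => exact hlen

/-- the `dm`-prefix of the stack is preserved when the length stays `≥ dm` -/
lemma aux18_take {s s' : TState B Var} {l : TLab Act0 Var} {dm : ℕ} (hd1 : 1 ≤ dm)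
    (h : TStep dec inc RelN effD Max s l s')
    (hs : dm ≤ s.α.length) (hs' : dm ≤ s'.α.length) :
    s'.α.take dm = s.α.take dm := by
  cases h with
  | push X hX hc => exact List.take_append_of_le_length hs
  | pop X hX =>
    dsimp only at hs' ⊢
    rw [List.length_dropLast] at hs'
    rw [List.dropLast_eq_take, List.take_take, min_eq_left (by omega)]
  | move hα hc => simp [hα] at hs; omega
  | act a X dd hXd hdec hinc b' hb => rfl
  | actD a hdec hinc => rfl

end Aux18

/-- in the FOND translation `T(Q)`, any infinite (goal-avoiding)
trajectory of a strong cyclic policy is terminating: there are a variable `X` and a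
depth `d` such that `X` sits at depth `d` of the stack in all recurrent states, `X` is
decremented at some recurrent state via an `a(X,d)` action, and no recurrent state
applies an action incrementing `X`. -/
theorem stmt18 {B Act0 Var : Type*} [Finite B] [Finite Var] [Finite Act0]
    (dec inc : Act0 → Finset Var)
    (RelN : Act0 → B → B → Prop) (effD : Act0 → B → B) (Max : ℕ)
    (Gset : B → Prop) (π : TState B Var → Option (TLab Act0 Var))
    (σ : ℕ → TState B Var)
    -- the initial state has empty stack and zero counters
    (hinit : (σ 0).α = [] ∧ (σ 0).cT = 0 ∧ ∀ d, (σ 0).c d = 0)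
    -- π is a strong cyclic solution w.r.t. the initial state σ 0 and the goal Gset
    (hsc : ∀ s, Relation.ReflTransGen (TpiStep dec inc RelN effD Max π) (σ 0) s →
      ∃ t, Relation.ReflTransGen (TpiStep dec inc RelN effD Max π) s t ∧ Gset t.b)
    -- σ is an infinite π-trajectory
    (hstep : ∀ i, ∃ l, π (σ i) = some l ∧
      TStep dec inc RelN effD Max (σ i) l (σ (i + 1)))
    -- avoiding goal states
    (hng : ∀ i, ¬ Gset (σ i).b) :
    ∃ (X : Var) (d : ℕ),
      (∀ s : TState B Var, {i | σ i = s}.Infinite → atDepth s.α X d) ∧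
      (∃ s : TState B Var, {i | σ i = s}.Infinite ∧
        ∃ a, π s = some (.act a X d)) ∧
      (∀ s : TState B Var, {i | σ i = s}.Infinite →
        ∀ l, π s = some l → ¬ incLab inc l X) := by
  classical
  letI : Fintype Var := Fintype.ofFinite Var
  set K := Fintype.card Var with hKdef
  have hK : ∀ lst : List Var, lst.Nodup → lst.length ≤ K := fun lst h => h.length_le_card
  -- the invariant holds along the trajectory
  have hinv : ∀ i, aux18Inv Max K (σ i) := by
    intro i
    induction i with
    | zero =>
      obtain ⟨h1, h2, h3⟩ := hinit
      exact ⟨by rw [h1]; exact List.nodup_nil, by simp [h1], by omega,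
        fun e => by simp [h3 e]⟩
    | succ n ih =>
      obtain ⟨l, hl, hs⟩ := hstep n
      exact aux18_inv hK hs ih
  -- all states from some time `N0` on are recurrent
  have hrec : ∃ N, ∀ i, N ≤ i → {j | σ j = σ i}.Infinite := by
    haveI : Finite {s : TState B Var // aux18Inv Max K s} := aux18_finite K
    set σ' : ℕ → {s : TState B Var // aux18Inv Max K s} := fun i => ⟨σ i, hinv i⟩
      with hσ'
    have hfib : ∀ i, {j | σ j = σ i} = {j | σ' j = σ' i} := by
      intro i; ext j; simp [hσ', Subtype.ext_iff]
    have hbad : {i : ℕ | ¬ {j | σ' j = σ' i}.Infinite}.Finite := by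
      have hsub : {i : ℕ | ¬ {j | σ' j = σ' i}.Infinite} ⊆
          ⋃ t ∈ {t | ¬ {j | σ' j = t}.Infinite}, {j | σ' j = t} := by
        intro i hi
        exact Set.mem_biUnion hi rfl
      exact (Set.Finite.biUnion (Set.toFinite _)
        (fun t ht => Set.not_infinite.mp ht)).subset hsub
    obtain ⟨N, hN⟩ := hbad.bddAbove
    refine ⟨N + 1, fun i hi => ?_⟩
    rw [hfib i]
    by_contra hcon
    have := hN hcon
    omega
  obtain ⟨N0, hN0⟩ := hrec
  -- reachability along the trajectory
  have hreach : ∀ i j, i ≤ j →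
      Relation.ReflTransGen (TpiStep dec inc RelN effD Max π) (σ i) (σ j) := by
    intro i j hij
    induction j, hij using Nat.le_induction with
    | base => exact Relation.ReflTransGen.refl
    | succ n hn ih => exact ih.tail (hstep n)
  -- `act` labels occur cofinally often
  have hactcof : ∀ N, ∃ i, N ≤ i ∧ ∃ a X dd, π (σ i) = some (TLab.act a X dd) := by
    intro N
    by_contra hcon
    push_neg at hcon
    have hdetr : ∀ s, Relation.ReflTransGen (TpiStep dec inc RelN effD Max π) (σ N) s →
        ∃ i, N ≤ i ∧ σ i = s := by
      intro s hs
      induction hs with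
      | refl => exact ⟨N, le_rfl, rfl⟩
      | tail h1 h2 ih =>
        obtain ⟨i, hi, rfl⟩ := ih
        obtain ⟨l, hl, hstep'⟩ := h2
        obtain ⟨l2, hl2, hstep2⟩ := hstep i
        rw [hl] at hl2
        obtain rfl := Option.some.inj hl2
        have hne : ∀ a X dd, l ≠ TLab.act a X dd := by
          intro a X dd hld
          exact hcon i hi a X dd (hld ▸ hl)
        exact ⟨i + 1, by omega, aux18_det hne hstep2 hstep'⟩
    obtain ⟨t, ht, hg⟩ := hsc (σ N) (hreach 0 N (Nat.zero_le N))
    obtain ⟨j, hj, rfl⟩ := hdetr t ht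
    exact hng j hg
  -- the minimal depth `d` of an act label at a recurrent time
  have hDne : {dd | ∃ i, N0 ≤ i ∧ ∃ a X, π (σ i) = some (TLab.act a X dd)}.Nonempty := by
    obtain ⟨i, hi, a, X, dd, hl⟩ := hactcof N0
    exact ⟨dd, i, hi, a, X, hl⟩
  set d := sInf {dd | ∃ i, N0 ≤ i ∧ ∃ a X, π (σ i) = some (TLab.act a X dd)} with hd
  have hdmem := Nat.sInf_mem hDne
  obtain ⟨i0, hi0, a0, X0, hπi0⟩ := hdmem
  have hdmin : ∀ i, N0 ≤ i → ∀ a X dd, π (σ i) = some (TLab.act a X dd) → d ≤ dd :=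
    fun i hi a X dd h => Nat.sInf_le ⟨i, hi, a, X, h⟩
  -- X0 is at depth d at time i0
  have hXd0 : atDepth (σ i0).α X0 d := by
    obtain ⟨l, hl, hs⟩ := hstep i0
    rw [hπi0] at hl
    obtain rfl := Option.some.inj hl
    exact (aux18_act_inv hs).1
  have hd1 : 1 ≤ d := hXd0.1
  have hlen0 : d ≤ (σ i0).α.length := by
    by_contra hcon
    have h := List.getElem?_eq_none (l := (σ i0).α) (i := d - 1) (by omega)
    rw [hXd0.2] at h
    exact Option.some_ne_none _ h
  -- eventually there are no pushes at any fixed depth `e < d`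
  have claimC : ∀ e, e < d → ∃ M, N0 ≤ M ∧ ∀ i, M ≤ i → ∀ X : Var,
      π (σ i) ≠ some (TLab.push X e) := by
    intro e
    induction e using Nat.strong_induction_on with
    | _ e ih =>
      intro hed
      have hM1 : ∃ M1, N0 ≤ M1 ∧ ∀ i, M1 ≤ i → ∀ (X : Var) (e' : ℕ), e' + 1 = e →
          π (σ i) ≠ some (TLab.push X e') := by
        rcases e with _ | e'
        · exact ⟨N0, le_rfl, fun i hi X e' h => by omega⟩
        · obtain ⟨M1, hM1a, hM1b⟩ := ih e' (by omega) (by omega)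
          refine ⟨M1, hM1a, fun i hi X e'' h => ?_⟩
          obtain rfl : e'' = e' := by omega
          exact hM1b i hi X
      obtain ⟨M1, hM1N, hM1⟩ := hM1
      have hmono : ∀ i j, M1 ≤ i → i ≤ j → (σ i).c e ≤ (σ j).c e := by
        intro i j hMi hij
        induction j, hij using Nat.le_induction with
        | base => exact le_rfl
        | succ n hn ihn =>
          refine le_trans ihn ?_
          obtain ⟨l, hl, hs⟩ := hstep n
          refine aux18_cmono e hs (fun a X dd hld => ?_) (fun X e' hld => ?_)
          · subst hld
            have := hdmin n (by omega) a X dd hl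
            omega
          · subst hld
            intro hee
            exact hM1 n (by omega) X e' (by omega) hl
      by_contra hcon
      push_neg at hcon
      have hgrow : ∀ k, ∃ i, M1 ≤ i ∧ k ≤ (σ i).c e := by
        intro k
        induction k with
        | zero => exact ⟨M1, le_rfl, Nat.zero_le _⟩
        | succ k ihk =>
          obtain ⟨i, hMi, hk⟩ := ihk
          obtain ⟨j, hj, X, hXj⟩ := hcon (max i N0) (le_max_right _ _)
          obtain ⟨l, hl, hs⟩ := hstep j
          rw [hXj] at hl
          obtain rfl := Option.some.inj hl
          obtain ⟨heq, hcp, _⟩ := aux18_push_inv hs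
          have hij : i ≤ j := le_trans (le_max_left _ _) hj
          have hcij : (σ i).c e ≤ (σ j).c e := hmono i j hMi hij
          exact ⟨j + 1, by omega, by rw [hcp]; omega⟩
      obtain ⟨i, hMi, hk⟩ := hgrow (Max + 1)
      have := ((hinv i).2.2.2 e).1
      omega
  -- eventually no pushes at any depth below d
  have claimC' : ∀ n, n ≤ d → ∃ M, N0 ≤ M ∧ ∀ i, M ≤ i → ∀ X : Var, ∀ e, e < n →
      π (σ i) ≠ some (TLab.push X e) := by
    intro n
    induction n with
    | zero => exact fun _ => ⟨N0, le_rfl, fun i hi X e he => absurd he (Nat.not_lt_zero e)⟩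
    | succ n ihn =>
      intro hnd
      obtain ⟨M1, h1, h2⟩ := ihn (by omega)
      obtain ⟨M2, h3, h4⟩ := claimC n (by omega)
      refine ⟨max M1 M2, le_trans h1 (le_max_left _ _), fun i hi X e he => ?_⟩
      rcases Nat.lt_succ_iff_lt_or_eq.mp he with h | rfl
      · exact h2 i (le_trans (le_max_left _ _) hi) X e h
      · exact h4 i (le_trans (le_max_right _ _) hi) X
  obtain ⟨M0, hM0N, hM0⟩ := claimC' d le_rfl
  -- from time M0 on, the stack has depth at least d
  have claimD : ∀ i, M0 ≤ i → d ≤ (σ i).α.length := by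
    intro i hi
    by_contra hcon
    push_neg at hcon
    have persist : ∀ j, i ≤ j → (σ j).α.length < d := by
      intro j hj
      induction j, hj using Nat.le_induction with
      | base => exact hcon
      | succ n hn ihn =>
        obtain ⟨l, hl, hs⟩ := hstep n
        refine aux18_len hd1 hs (fun X e' hld he' => ?_) ihn
        subst hld
        exact hM0 n (by omega) X e' he' hl
    obtain ⟨j, hjmem, hij⟩ := (hN0 i0 hi0).exists_gt i
    simp only [Set.mem_setOf_eq] at hjmem
    have hlt : (σ j).α.length < d := persist j (le_of_lt hij)
    rw [hjmem] at hlt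
    omega
  -- from time M0 on, the d-prefix of the stack is constant
  have claimE : ∀ i, M0 ≤ i → (σ i).α.take d = (σ M0).α.take d := by
    intro i hi
    induction i, hi using Nat.le_induction with
    | base => rfl
    | succ n hn ihn =>
      rw [← ihn]
      obtain ⟨l, hl, hs⟩ := hstep n
      exact aux18_take hd1 hs (claimD n hn) (claimD (n + 1) (by omega))
  obtain ⟨j0, hj0mem, hj0⟩ := (hN0 i0 hi0).exists_gt M0
  simp only [Set.mem_setOf_eq] at hj0mem
  -- from time M0 on, X0 is at depth d
  have hatom : ∀ i, M0 ≤ i → atDepth (σ i).α X0 d := by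
    intro i hi
    refine ⟨hd1, ?_⟩
    have h1 : (σ i).α.take d = (σ j0).α.take d := by
      rw [claimE i hi, claimE j0 (le_of_lt hj0)]
    have h2 := congrArg (fun t : List Var => t[d - 1]?) h1
    have hlt : d - 1 < d := by omega
    simp only [List.getElem?_take, if_pos hlt] at h2
    rw [h2, hj0mem]
    exact hXd0.2
  refine ⟨X0, d, ?_, ⟨σ i0, hN0 i0 hi0, a0, hπi0⟩, ?_⟩
  · intro s hs
    obtain ⟨i, hmem, hMi⟩ := hs.exists_gt M0
    simp only [Set.mem_setOf_eq] at hmem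
    rw [← hmem]
    exact hatom i (le_of_lt hMi)
  · intro s hs l hl hincl
    obtain ⟨i, hmem, hMi⟩ := hs.exists_gt M0
    simp only [Set.mem_setOf_eq] at hmem
    obtain ⟨l2, hl2, hs2⟩ := hstep i
    rw [hmem, hl] at hl2
    obtain rfl := Option.some.inj hl2
    have hXmem : X0 ∈ (σ i).α := List.mem_of_getElem? (hatom i (le_of_lt hMi)).2
    cases l with
    | push X dd => exact hincl
    | pop X dd => exact hincl
    | move => exact hincl
    | act a X dd => exact (aux18_act_inv hs2).2 X0 hincl hXmem
    | actD a => exact aux18_actD_inv hs2 X0 hincl hXmem
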